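/- Let p be a prime, let G₁, …, G_k be finite groups, and set G = G₁ × ⋯ × G_k. Let P be a p-subgroup of G and for each i let Pᵢ be the image of P under the projection G → Gᵢ. Then P is p-centric in G if and only if Pᵢ is p-centric in Gᵢ for each 1 ≤ i ≤ k and Z(P₁) × ⋯ × Z(P_k) ≤ P. -/
import Mathlib

open Subgroup

/-- A `p`-subgroup `P` of a finite group `G` is *`p`-centric* in `G` if its center `Z(P)`
is a Sylow `p`-subgroup of the centralizer `C_G(P)`. -/
def IsPCentric (p : ℕ) {G : Type*} [Group G] (P : Subgroup G) : Prop :=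
  ∃ Q : Sylow p ↥(Subgroup.centralizer (P : Set G)),
    (Q : Subgroup ↥(Subgroup.centralizer (P : Set G))) =
      (P ⊓ Subgroup.centralizer (P : Set G)).subgroupOf
        (Subgroup.centralizer (P : Set G))

/-- `K` is a Sylow `p`-subgroup of `H` (both subgroups of an ambient group `G`):
`K ≤ H`, `K` is a `p`-group, and `K` is maximal among `p`-subgroups of `H`. -/
def IsSylowIn (p : ℕ) {G : Type*} [Group G] (K H : Subgroup G) : Prop :=
  K ≤ H ∧ IsPGroup p K ∧ ∀ L : Subgroup G, L ≤ H → IsPGroup p L → K ≤ L → L ≤ K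

lemma isPGroup_subgroupOf_iff {G : Type*} [Group G] {p : ℕ} {K H : Subgroup G} (h : K ≤ H) :
    IsPGroup p (K.subgroupOf H) ↔ IsPGroup p K := by
  constructor
  · intro hpg
    exact hpg.of_surjective (subgroupOfEquivOfLe h).toMonoidHom (subgroupOfEquivOfLe h).surjective
  · intro hpg
    exact hpg.of_surjective (subgroupOfEquivOfLe h).symm.toMonoidHom
      (subgroupOfEquivOfLe h).symm.surjective

lemma exists_sylow_iff {G : Type*} [Group G] (p : ℕ) (K H : Subgroup G) (hKH : K ≤ H) :
    (∃ Q : Sylow p ↥H, (Q : Subgroup ↥H) = K.subgroupOf H) ↔ IsSylowIn p K H := by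
  constructor
  · rintro ⟨Q, hQ⟩
    refine ⟨hKH, (isPGroup_subgroupOf_iff hKH).mp (hQ ▸ Q.isPGroup'), ?_⟩
    intro L hLH hLp hKL
    have h1 : (Q : Subgroup ↥H) ≤ L.subgroupOf H := by
      rw [hQ]; exact comap_mono hKL
    have h2 := Q.is_maximal' ((isPGroup_subgroupOf_iff hLH).mpr hLp) h1
    rw [hQ] at h2
    have h3 : L = K := by
      calc L = (L.subgroupOf H).map H.subtype := by
              rw [subgroupOf_map_subtype, inf_eq_left.mpr hLH]
        _ = (K.subgroupOf H).map H.subtype := by rw [h2]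
        _ = K := by rw [subgroupOf_map_subtype, inf_eq_left.mpr hKH]
    exact h3.le
  · rintro ⟨hle, hpg, hmax⟩
    refine ⟨⟨K.subgroupOf H, (isPGroup_subgroupOf_iff hKH).mpr hpg, ?_⟩, rfl⟩
    intro Q hQp hKQ
    have hL : (Q.map H.subtype) ≤ H := map_subtype_le Q
    have hLp : IsPGroup p (Q.map H.subtype) := hQp.map H.subtype
    have hKL : K ≤ Q.map H.subtype := by
      have := map_mono (f := H.subtype) hKQ
      rwa [subgroupOf_map_subtype, inf_eq_left.mpr hKH] at this
    have := hmax _ hL hLp hKL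
    apply le_antisymm
    · intro x hx
      rw [mem_subgroupOf]
      exact this ⟨x, hx, rfl⟩
    · exact hKQ

lemma isPGroup_pi {p : ℕ} {k : ℕ} {G : Fin k → Type*} [∀ i, Group (G i)]
    {Z : ∀ i, Subgroup (G i)} (h : ∀ i, IsPGroup p (Z i)) :
    IsPGroup p (Subgroup.pi Set.univ Z) := by
  intro g
  have hmem : ∀ i, (g : ∀ i, G i) i ∈ Z i := fun i => (mem_pi _).mp g.2 i (Set.mem_univ i)
  have key : ∀ i, ∃ n : ℕ, ((g : ∀ i, G i) i) ^ p ^ n = 1 := by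
    intro i
    obtain ⟨n, hn⟩ := h i ⟨(g : ∀ i, G i) i, hmem i⟩
    exact ⟨n, congrArg Subtype.val hn⟩
  choose n hn using key
  refine ⟨Finset.univ.sup n, ?_⟩
  ext1
  rw [SubmonoidClass.coe_pow]
  funext i
  have hle : n i ≤ Finset.univ.sup n := Finset.le_sup (Finset.mem_univ i)
  calc ((g : ∀ i, G i) ^ p ^ Finset.univ.sup n) i
      = ((g : ∀ i, G i) i) ^ p ^ Finset.univ.sup n := Pi.pow_apply _ _ i
    _ = (((g : ∀ i, G i) i) ^ p ^ n i) ^ p ^ (Finset.univ.sup n - n i) := by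
        rw [← pow_mul, ← pow_add, Nat.add_sub_cancel' hle]
    _ = 1 := by rw [hn i, one_pow]

lemma isSylowIn_pi_iff (p : ℕ) {k : ℕ} {G : Fin k → Type*} [∀ i, Group (G i)]
    (Z H : ∀ i, Subgroup (G i)) (hZH : ∀ i, Z i ≤ H i) (hZp : ∀ i, IsPGroup p (Z i)) :
    IsSylowIn p (Subgroup.pi Set.univ Z) (Subgroup.pi Set.univ H) ↔
      ∀ i, IsSylowIn p (Z i) (H i) := by
  classical
  constructor
  · rintro ⟨-, -, hmax⟩ i
    refine ⟨hZH i, hZp i, ?_⟩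
    intro L hLH hLp hZL
    set Z' : ∀ j, Subgroup (G j) := Function.update Z i L with hZ'
    have hupd : Z' i = L := by
      rw [hZ']; exact Function.update_self i L Z
    have hupd' : ∀ j, j ≠ i → Z' j = Z j := by
      intro j hj; rw [hZ']; exact Function.update_of_ne hj L Z
    have hZ'p : ∀ j, IsPGroup p (Z' j) := by
      intro j
      rcases eq_or_ne j i with rfl | h
      · rw [hupd]; exact hLp
      · rw [hupd' j h]; exact hZp j
    have hZ'H : Subgroup.pi Set.univ Z' ≤ Subgroup.pi Set.univ H := by
      intro x hx
      rw [mem_pi] at hx ⊢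
      intro j hj
      rcases eq_or_ne j i with rfl | h
      · exact hLH (hupd ▸ hx j hj)
      · exact hZH j ((hupd' j h) ▸ hx j hj)
    have hsub : Subgroup.pi Set.univ Z ≤ Subgroup.pi Set.univ Z' := by
      intro x hx
      rw [mem_pi] at hx ⊢
      intro j hj
      rcases eq_or_ne j i with rfl | h
      · rw [hupd]; exact hZL (hx j hj)
      · rw [hupd' j h]; exact hx j hj
    have hfin := hmax _ hZ'H (isPGroup_pi hZ'p) hsub
    intro x hx
    have hmem : Pi.mulSingle i x ∈ Subgroup.pi Set.univ Z' := by
      rw [mem_pi]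
      intro j hj
      rcases eq_or_ne j i with rfl | h
      · rw [hupd]; simpa using hx
      · rw [hupd' j h]
        have h1 : Pi.mulSingle i x j = 1 := Pi.mulSingle_eq_of_ne h x
        rw [h1]; exact one_mem _
    have := (mem_pi _).mp (hfin hmem) i (Set.mem_univ i)
    simpa using this
  · intro hall
    refine ⟨fun x hx => by rw [mem_pi] at hx ⊢; exact fun i hi => hZH i (hx i hi),
      isPGroup_pi hZp, ?_⟩
    intro L hLH hLp hZL
    intro x hx
    rw [mem_pi]
    intro i _
    set Li : Subgroup (G i) := L.map (Pi.evalMonoidHom G i) with hLi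
    have hLiH : Li ≤ H i := by
      rintro y ⟨z, hz, rfl⟩
      exact (mem_pi _).mp (hLH hz) i (Set.mem_univ i)
    have hLip : IsPGroup p Li := hLp.map _
    have hZLi : Z i ≤ Li := by
      intro y hy
      refine ⟨Pi.mulSingle i y, hZL ?_, by simp [Pi.evalMonoidHom]⟩
      rw [mem_pi]
      intro j hj
      rcases eq_or_ne j i with h | h
      · subst h; simpa using hy
      · have : Pi.mulSingle i y j = 1 := Pi.mulSingle_eq_of_ne h y
        rw [this]; exact one_mem _
    exact (hall i).2.2 Li hLiH hLip hZLi ⟨x, hx, rfl⟩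

lemma centralizer_pi_eq {k : ℕ} {G : Fin k → Type*} [∀ i, Group (G i)]
    (P : Subgroup (∀ i, G i)) :
    Subgroup.centralizer (P : Set (∀ i, G i)) =
      Subgroup.pi Set.univ
        (fun i => Subgroup.centralizer
          ((P.map (Pi.evalMonoidHom G i) : Subgroup (G i)) : Set (G i))) := by
  ext g
  rw [mem_pi]
  constructor
  · intro hg i _
    rw [mem_centralizer_iff]
    rintro y ⟨x, hx, rfl⟩
    have := mem_centralizer_iff.mp hg x hx
    exact congrFun this i
  · intro hg
    rw [mem_centralizer_iff]
    intro x hx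
    funext i
    exact mem_centralizer_iff.mp (hg i (Set.mem_univ i)) (x i) ⟨x, hx, rfl⟩

/-- Let `G = G₁ × ⋯ × G_k` be a product of finite groups, `P ≤ G` a
`p`-subgroup, and `Pᵢ` the image of `P` under the projection `G → Gᵢ`.  Then `P` is
`p`-centric in `G` if and only if each `Pᵢ` is `p`-centric in `Gᵢ` and
`Z(P₁) × ⋯ × Z(P_k) ≤ P`. -/
theorem isPCentric_pi_iff
    (p : ℕ) (hp : p.Prime) {k : ℕ} (G : Fin k → Type*)
    [∀ i, Group (G i)] [∀ i, Finite (G i)]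
    (P : Subgroup (∀ i, G i)) (hP : IsPGroup p ↥P) :
    IsPCentric p P ↔
      (∀ i, IsPCentric p (P.map (Pi.evalMonoidHom G i))) ∧
        Subgroup.pi Set.univ
            (fun i => P.map (Pi.evalMonoidHom G i) ⊓
              Subgroup.centralizer ((P.map (Pi.evalMonoidHom G i) : Subgroup (G i)) : Set (G i)))
          ≤ P := by
  classical
  set Pm : ∀ i, Subgroup (G i) := fun i => P.map (Pi.evalMonoidHom G i) with hPm
  set Ci : ∀ i, Subgroup (G i) :=
    fun i => Subgroup.centralizer ((Pm i : Subgroup (G i)) : Set (G i)) with hCidef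
  set Zi : ∀ i, Subgroup (G i) := fun i => Pm i ⊓ Ci i with hZidef
  have hC : Subgroup.centralizer (P : Set (∀ i, G i)) = Subgroup.pi Set.univ Ci :=
    centralizer_pi_eq P
  have hZleC : ∀ i, Zi i ≤ Ci i := fun i => inf_le_right
  have hZp : ∀ i, IsPGroup p (Zi i) := fun i => (hP.map _).to_le inf_le_left
  have hPC_le_piZ : P ⊓ Subgroup.centralizer (P : Set (∀ i, G i)) ≤ Subgroup.pi Set.univ Zi := by
    intro g hg
    rw [mem_inf] at hg
    obtain ⟨hg1, hg2⟩ := hg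
    rw [hC, mem_pi] at hg2
    rw [mem_pi]
    exact fun i hi => ⟨⟨g, hg1, rfl⟩, hg2 i hi⟩
  have hpiZ_le_C : Subgroup.pi Set.univ Zi ≤ Subgroup.centralizer (P : Set (∀ i, G i)) := by
    rw [hC]
    intro g hg
    rw [mem_pi] at hg ⊢
    exact fun i hi => hZleC i (hg i hi)
  have e1 : IsPCentric p P ↔
      IsSylowIn p (P ⊓ Subgroup.centralizer (P : Set (∀ i, G i)))
        (Subgroup.centralizer (P : Set (∀ i, G i))) :=
    exists_sylow_iff p _ _ inf_le_right
  have e2 : ∀ i, IsPCentric p (Pm i) ↔ IsSylowIn p (Zi i) (Ci i) :=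
    fun i => exists_sylow_iff p _ _ inf_le_right
  rw [e1]
  constructor
  · rintro ⟨hle, hpg, hmax⟩
    have h1 : Subgroup.pi Set.univ Zi ≤ P ⊓ Subgroup.centralizer (P : Set (∀ i, G i)) :=
      hmax _ hpiZ_le_C (isPGroup_pi hZp) hPC_le_piZ
    have heq : P ⊓ Subgroup.centralizer (P : Set (∀ i, G i)) = Subgroup.pi Set.univ Zi :=
      le_antisymm hPC_le_piZ h1
    have hS : IsSylowIn p (Subgroup.pi Set.univ Zi) (Subgroup.pi Set.univ Ci) := by
      rw [← heq, ← hC]; exact ⟨hle, hpg, hmax⟩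
    refine ⟨fun i => (e2 i).mpr ((isSylowIn_pi_iff p Zi Ci hZleC hZp).mp hS i), ?_⟩
    exact h1.trans inf_le_left
  · rintro ⟨hall, hle⟩
    have heq : P ⊓ Subgroup.centralizer (P : Set (∀ i, G i)) = Subgroup.pi Set.univ Zi :=
      le_antisymm hPC_le_piZ (le_inf hle hpiZ_le_C)
    rw [heq, hC]
    exact (isSylowIn_pi_iff p Zi Ci hZleC hZp).mpr (fun i => (e2 i).mp (hall i))
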